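/- Let n ≥ 1, let g ∈ ℝ, and let U ⊆ ℝ × ℝⁿ be open. Let v : ℝ × ℝⁿ → ℝⁿ and p : ℝ × ℝⁿ → ℝ be three times continuously differentiable, and suppose that at every point of U the Euler equations hold, ∂_t v_k + Σ_j v_j ∂_j v_k = −∂_k p − g·δ_{kn} for every 1 ≤ k ≤ n, together with Σ_j ∂_j v_j = 0 on U. Then at every point of U: Δ( ∂_t p + Σ_j v_j ∂_j p ) = 4 Σ_{i,j} ∂_i ∂_j p · ∂_j v_i + 2 Σ_{i,j,k} ∂_i v_j · ∂_j v_k · ∂_k v_i + Σ_j Δv_j · ∂_j p. -/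

import Mathlib

open Set

/-- Time partial derivative of a function on `ℝ × ℝⁿ`. -/
noncomputable def pdt {n : ℕ} (f : ℝ × (Fin n → ℝ) → ℝ) (q : ℝ × (Fin n → ℝ)) : ℝ :=
  fderiv ℝ f q (1, 0)

/-- Spatial partial derivative in the `i`-th coordinate of a function on `ℝ × ℝⁿ`. -/
noncomputable def pdx {n : ℕ} (i : Fin n) (f : ℝ × (Fin n → ℝ) → ℝ)
    (q : ℝ × (Fin n → ℝ)) : ℝ :=
  fderiv ℝ f q (0, Pi.single i 1)

/-! ### Auxiliary toolbox: directional partial derivatives -/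

/-- Directional partial derivative in direction `w`. -/
noncomputable def pd {n : ℕ} (w : ℝ × (Fin n → ℝ)) (f : ℝ × (Fin n → ℝ) → ℝ)
    (q : ℝ × (Fin n → ℝ)) : ℝ := fderiv ℝ f q w

/-- The spatial direction vectors. -/
noncomputable def ex {n : ℕ} (i : Fin n) : ℝ × (Fin n → ℝ) := (0, Pi.single i 1)

/-- The time direction vector. -/
noncomputable def et {n : ℕ} : ℝ × (Fin n → ℝ) := (1, 0)

lemma pdt_pd {n : ℕ} (f : ℝ × (Fin n → ℝ) → ℝ) : pdt f = pd et f := rfl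

lemma pdx_pd {n : ℕ} (i : Fin n) (f : ℝ × (Fin n → ℝ) → ℝ) : pdx i f = pd (ex i) f := rfl

section Toolbox

variable {n : ℕ}

lemma pd_add (w : ℝ × (Fin n → ℝ)) {f g : ℝ × (Fin n → ℝ) → ℝ} {q : ℝ × (Fin n → ℝ)}
    (hf : DifferentiableAt ℝ f q) (hg : DifferentiableAt ℝ g q) :
    pd w (fun r => f r + g r) q = pd w f q + pd w g q := by
  simp [pd, fderiv_fun_add hf hg]

lemma pd_mul (w : ℝ × (Fin n → ℝ)) {f g : ℝ × (Fin n → ℝ) → ℝ} {q : ℝ × (Fin n → ℝ)}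
    (hf : DifferentiableAt ℝ f q) (hg : DifferentiableAt ℝ g q) :
    pd w (fun r => f r * g r) q = pd w f q * g q + f q * pd w g q := by
  simp [pd, fderiv_fun_mul hf hg]; ring

lemma pd_sum (w : ℝ × (Fin n → ℝ)) {ι : Type*} (s : Finset ι)
    {f : ι → ℝ × (Fin n → ℝ) → ℝ} {q : ℝ × (Fin n → ℝ)}
    (hf : ∀ i ∈ s, DifferentiableAt ℝ (f i) q) :
    pd w (fun r => ∑ i ∈ s, f i r) q = ∑ i ∈ s, pd w (f i) q := by
  simp [pd, fderiv_fun_sum hf]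

lemma pd_zero_of_eqOn (w : ℝ × (Fin n → ℝ)) {f : ℝ × (Fin n → ℝ) → ℝ}
    {U : Set (ℝ × (Fin n → ℝ))} (hU : IsOpen U) {q : ℝ × (Fin n → ℝ)} (hq : q ∈ U)
    (h : ∀ r ∈ U, f r = 0) : pd w f q = 0 := by
  have he : f =ᶠ[nhds q] (fun _ => 0) := Filter.eventuallyEq_of_mem (hU.mem_nhds hq) h
  rw [pd, he.fderiv_eq]; simp

lemma pd_cd2 {f : ℝ × (Fin n → ℝ) → ℝ} (w : ℝ × (Fin n → ℝ))
    (hf : ContDiff ℝ 3 f) : ContDiff ℝ 2 (pd w f) := by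
  have h1 : ContDiff ℝ 2 (fderiv ℝ f) :=
    hf.fderiv_right (by norm_num : (2 : WithTop ℕ∞) + 1 ≤ 3)
  exact (ContinuousLinearMap.apply ℝ ℝ w).contDiff.comp h1

lemma pd_cd1 {f : ℝ × (Fin n → ℝ) → ℝ} (w : ℝ × (Fin n → ℝ))
    (hf : ContDiff ℝ 2 f) : ContDiff ℝ 1 (pd w f) := by
  have h1 : ContDiff ℝ 1 (fderiv ℝ f) :=
    hf.fderiv_right (by norm_num : (1 : WithTop ℕ∞) + 1 ≤ 2)
  exact (ContinuousLinearMap.apply ℝ ℝ w).contDiff.comp h1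

lemma pd_comm {f : ℝ × (Fin n → ℝ) → ℝ} (hf : ContDiff ℝ 2 f)
    (w u : ℝ × (Fin n → ℝ)) : pd w (pd u f) = pd u (pd w f) := by
  funext q
  have hd : DifferentiableAt ℝ (fderiv ℝ f) q :=
    (hf.fderiv_right (by norm_num : (1 : WithTop ℕ∞) + 1 ≤ 2)).differentiable
      (by norm_num) q
  have e : ∀ a b : ℝ × (Fin n → ℝ),
      fderiv ℝ (fun r => fderiv ℝ f r a) q b = fderiv ℝ (fderiv ℝ f) q b a := by
    intro a b
    rw [fderiv_clm_apply hd (differentiableAt_const a)]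
    simp
  have hsym : IsSymmSndFDerivAt ℝ f q :=
    hf.contDiffAt.isSymmSndFDerivAt (by norm_num)
  show fderiv ℝ (fun r => fderiv ℝ f r u) q w = fderiv ℝ (fun r => fderiv ℝ f r w) q u
  rw [e, e, hsym]

lemma pd_expand2 (w : ℝ × (Fin n → ℝ)) {f : ℝ × (Fin n → ℝ) → ℝ}
    {a b : Fin n → ℝ × (Fin n → ℝ) → ℝ} {q : ℝ × (Fin n → ℝ)}
    (hf : DifferentiableAt ℝ f q) (ha : ∀ j, DifferentiableAt ℝ (a j) q)
    (hb : ∀ j, DifferentiableAt ℝ (b j) q) :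
    pd w (fun s => f s + ∑ j, a j s * b j s) q
      = pd w f q + ∑ j, (pd w (a j) q * b j q + a j q * pd w (b j) q) := by
  rw [pd_add w hf (DifferentiableAt.fun_sum fun j _ => (ha j).fun_mul (hb j)),
      pd_sum w Finset.univ (fun j _ => (ha j).fun_mul (hb j))]
  exact congrArg _ (Finset.sum_congr rfl fun j _ => pd_mul w (ha j) (hb j))

lemma pd_expand_material (w : ℝ × (Fin n → ℝ)) {f h : ℝ × (Fin n → ℝ) → ℝ}
    {a b : Fin n → ℝ × (Fin n → ℝ) → ℝ} (c : ℝ) {q : ℝ × (Fin n → ℝ)}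
    (hf : DifferentiableAt ℝ f q) (hh : DifferentiableAt ℝ h q)
    (ha : ∀ j, DifferentiableAt ℝ (a j) q) (hb : ∀ j, DifferentiableAt ℝ (b j) q) :
    pd w (fun s => f s + ∑ j, a j s * b j s + h s + c) q
      = pd w f q + ∑ j, (pd w (a j) q * b j q + a j q * pd w (b j) q) + pd w h q := by
  have d1 : DifferentiableAt ℝ (fun s => f s + ∑ j, a j s * b j s) q :=
    hf.add (DifferentiableAt.fun_sum fun j _ => (ha j).fun_mul (hb j))
  rw [pd_add w (d1.fun_add hh) (differentiableAt_const c), pd_add w d1 hh,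
    pd_expand2 w hf ha hb]
  simp [pd]

lemma pd_expand3 (w : ℝ × (Fin n → ℝ)) {f : ℝ × (Fin n → ℝ) → ℝ}
    {a b c d : Fin n → ℝ × (Fin n → ℝ) → ℝ} {q : ℝ × (Fin n → ℝ)}
    (hf : DifferentiableAt ℝ f q) (ha : ∀ j, DifferentiableAt ℝ (a j) q)
    (hb : ∀ j, DifferentiableAt ℝ (b j) q) (hc : ∀ j, DifferentiableAt ℝ (c j) q)
    (hd : ∀ j, DifferentiableAt ℝ (d j) q) :
    pd w (fun s => f s + ∑ j, (a j s * b j s + c j s * d j s)) q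
      = pd w f q + ∑ j, (pd w (a j) q * b j q + a j q * pd w (b j) q
          + (pd w (c j) q * d j q + c j q * pd w (d j) q)) := by
  rw [pd_add w hf (DifferentiableAt.fun_sum fun j _ =>
        ((ha j).fun_mul (hb j)).fun_add ((hc j).fun_mul (hd j))),
      pd_sum w Finset.univ (fun j _ => ((ha j).fun_mul (hb j)).fun_add ((hc j).fun_mul (hd j)))]
  refine congrArg _ (Finset.sum_congr rfl fun j _ => ?_)
  rw [pd_add w ((ha j).fun_mul (hb j)) ((hc j).fun_mul (hd j)), pd_mul w (ha j) (hb j),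
    pd_mul w (hc j) (hd j)]

lemma pd_expandW (w : ℝ × (Fin n → ℝ)) {F : Fin n → ℝ × (Fin n → ℝ) → ℝ}
    {a b : Fin n → Fin n → ℝ × (Fin n → ℝ) → ℝ} {q : ℝ × (Fin n → ℝ)}
    (hF : ∀ i, DifferentiableAt ℝ (F i) q)
    (ha : ∀ j k, DifferentiableAt ℝ (a j k) q)
    (hb : ∀ j k, DifferentiableAt ℝ (b j k) q) :
    pd w (fun s => (∑ i, F i s) + ∑ j, ∑ k, a j k s * b j k s) q
      = (∑ i, pd w (F i) q)
        + ∑ j, ∑ k, (pd w (a j k) q * b j k q + a j k q * pd w (b j k) q) := by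
  rw [pd_add w (DifferentiableAt.fun_sum fun i _ => hF i)
      (DifferentiableAt.fun_sum fun j _ => DifferentiableAt.fun_sum fun k _ =>
        (ha j k).fun_mul (hb j k)),
    pd_sum w Finset.univ (fun i _ => hF i),
    pd_sum w Finset.univ (fun j _ => DifferentiableAt.fun_sum fun k _ =>
      (ha j k).fun_mul (hb j k))]
  refine congrArg _ (Finset.sum_congr rfl fun j _ => ?_)
  rw [pd_sum w Finset.univ (fun k _ => (ha j k).fun_mul (hb j k))]
  exact Finset.sum_congr rfl fun k _ => pd_mul w (ha j k) (hb j k)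

lemma sum3_comm {M : Type*} [AddCommMonoid M] {a b c : ℕ}
    (f : Fin a → Fin b → Fin c → M) :
    ∑ m, ∑ j, ∑ k, f m j k = ∑ j, ∑ k, ∑ m, f m j k := by
  rw [Finset.sum_comm]
  exact Finset.sum_congr rfl fun j _ => Finset.sum_comm

end Toolbox

/-- Laplacian of the material derivative of the pressure of an incompressible Euler
flow: `Δ(D_t p) = 4 tr(D²p·Dv) + 2 tr((Dv)³) + ⟨Δv, ∇p⟩`. -/
theorem laplacian_material_derivative_pressure {n : ℕ} (hn : 1 ≤ n) (g : ℝ)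
    (U : Set (ℝ × (Fin n → ℝ))) (hU : IsOpen U)
    (v : ℝ × (Fin n → ℝ) → Fin n → ℝ) (p : ℝ × (Fin n → ℝ) → ℝ)
    (hv : ContDiff ℝ 3 v) (hp : ContDiff ℝ 3 p)
    (heuler : ∀ q ∈ U, ∀ k : Fin n,
      pdt (fun r => v r k) q + ∑ j, v q j * pdx j (fun r => v r k) q
        = -pdx k p q - (if (k : ℕ) = n - 1 then g else 0))
    (hdiv : ∀ q ∈ U, ∑ j, pdx j (fun r => v r j) q = 0) :
    ∀ q ∈ U,
      ∑ i, pdx i (pdx i (fun r => pdt p r + ∑ j, v r j * pdx j p r)) q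
        = 4 * ∑ i, ∑ j, pdx i (pdx j p) q * pdx j (fun r => v r i) q
          + 2 * ∑ i, ∑ j, ∑ k, pdx i (fun r => v r j) q * pdx j (fun r => v r k) q
              * pdx k (fun r => v r i) q
          + ∑ j, (∑ i, pdx i (pdx i (fun r => v r j)) q) * pdx j p q := by
  simp only [pdt_pd, pdx_pd] at heuler hdiv ⊢
  -- smoothness bookkeeping
  have hv3 : ∀ j, ContDiff ℝ 3 fun r => v r j := fun j => contDiff_pi.mp hv j
  have hp2 : ContDiff ℝ 2 p := hp.of_le (by norm_num)
  have hv2 : ∀ j, ContDiff ℝ 2 fun r => v r j := fun j => (hv3 j).of_le (by norm_num)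
  have hdv2 : ∀ w j, ContDiff ℝ 2 (pd w fun r => v r j) := fun w j => pd_cd2 w (hv3 j)
  have hdp2 : ∀ w, ContDiff ℝ 2 (pd w p) := fun w => pd_cd2 w hp
  have hddv1 : ∀ w u j, ContDiff ℝ 1 (pd w (pd u fun r => v r j)) :=
    fun w u j => pd_cd1 w (hdv2 u j)
  have hddp1 : ∀ w u, ContDiff ℝ 1 (pd w (pd u p)) := fun w u => pd_cd1 w (hdp2 u)
  have Dv : ∀ j r, DifferentiableAt ℝ (fun r => v r j) r :=
    fun j r => ((hv3 j).differentiable (by norm_num)) r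
  have Dp : ∀ r, DifferentiableAt ℝ p r := fun r => (hp.differentiable (by norm_num)) r
  have Ddv : ∀ w j r, DifferentiableAt ℝ (pd w fun r => v r j) r :=
    fun w j r => ((hdv2 w j).differentiable (by norm_num)) r
  have Ddp : ∀ w r, DifferentiableAt ℝ (pd w p) r :=
    fun w r => ((hdp2 w).differentiable (by norm_num)) r
  have Dddv : ∀ w u j r, DifferentiableAt ℝ (pd w (pd u fun r => v r j)) r :=
    fun w u j r => ((hddv1 w u j).differentiable (by norm_num)) r
  have Dddp : ∀ w u r, DifferentiableAt ℝ (pd w (pd u p)) r :=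
    fun w u r => ((hddp1 w u).differentiable (by norm_num)) r
  -- commutation of second partial derivatives
  have cp : ∀ w u, pd w (pd u p) = pd u (pd w p) := fun w u => pd_comm hp2 w u
  have cv : ∀ w u j, pd w (pd u fun r => v r j) = pd u (pd w fun r => v r j) :=
    fun w u j => pd_comm (hv2 j) w u
  have cdp : ∀ w u a, pd w (pd u (pd a p)) = pd u (pd w (pd a p)) :=
    fun w u a => pd_comm (hdp2 a) w u
  -- the Euler equations, as vanishing of explicit functions on U
  have hE0 : ∀ k : Fin n, ∀ s ∈ U,
      pd et (fun r => v r k) s + ∑ j, v s j * pd (ex j) (fun r => v r k) s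
        + pd (ex k) p s + (if (k : ℕ) = n - 1 then g else 0) = 0 := by
    intro k s hs
    have := heuler s hs k
    linarith
  -- differentiated Euler equations at points of U
  have euler2 : ∀ r ∈ U, ∀ w : ℝ × (Fin n → ℝ), ∀ k : Fin n,
      pd w (pd et fun s => v s k) r
        + ∑ j, (pd w (fun s => v s j) r * pd (ex j) (fun s => v s k) r
            + v r j * pd w (pd (ex j) fun s => v s k) r)
        + pd w (pd (ex k) p) r = 0 := by
    intro r hr w k
    have h0 : pd w (fun s => pd et (fun u => v u k) s
        + ∑ j, v s j * pd (ex j) (fun u => v u k) s + pd (ex k) p s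
        + (if (k : ℕ) = n - 1 then g else 0)) r = 0 :=
      pd_zero_of_eqOn w hU hr (fun s hs => hE0 k s hs)
    have hexp := pd_expand_material w (f := pd et (fun u => v u k))
      (h := pd (ex k) p) (a := fun j s => v s j)
      (b := fun j => pd (ex j) (fun u => v u k))
      (if (k : ℕ) = n - 1 then g else 0) (q := r)
      (Ddv et k r) (Ddp (ex k) r) (fun j => Dv j r) (fun j => Ddv (ex j) k r)
    exact hexp.symm.trans h0
  -- pressure Poisson equation on U
  have poisson : ∀ r ∈ U,
      (∑ i, pd (ex i) (pd (ex i) p) r)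
        + ∑ j, ∑ k, pd (ex j) (fun s => v s k) r * pd (ex k) (fun s => v s j) r = 0 := by
    intro r hr
    have hsum : ∑ k, (pd (ex k) (pd et fun s => v s k) r
        + ∑ j, (pd (ex k) (fun s => v s j) r * pd (ex j) (fun s => v s k) r
            + v r j * pd (ex k) (pd (ex j) fun s => v s k) r)
        + pd (ex k) (pd (ex k) p) r) = 0 :=
      Finset.sum_eq_zero fun k _ => euler2 r hr (ex k) k
    simp only [Finset.sum_add_distrib] at hsum
    have hT1 : ∑ k, pd (ex k) (pd et fun s => v s k) r = 0 := by
      have e : ∀ k : Fin n, pd (ex k) (pd et fun s => v s k) r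
          = pd et (pd (ex k) fun s => v s k) r := fun k => by rw [cv]
      rw [Finset.sum_congr rfl fun k _ => e k,
        ← pd_sum et Finset.univ (fun k _ => Ddv (ex k) k r)]
      exact pd_zero_of_eqOn et hU hr (fun s hs => hdiv s hs)
    have hT2 : ∑ k, ∑ j, v r j * pd (ex k) (pd (ex j) fun s => v s k) r = 0 := by
      rw [Finset.sum_comm]
      refine Finset.sum_eq_zero fun j _ => ?_
      have e : ∀ k : Fin n, v r j * pd (ex k) (pd (ex j) fun s => v s k) r
          = v r j * pd (ex j) (pd (ex k) fun s => v s k) r := fun k => by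
        rw [cv (ex k) (ex j) k]
      rw [Finset.sum_congr rfl fun k _ => e k, ← Finset.mul_sum,
        ← pd_sum (ex j) Finset.univ (fun k _ => Ddv (ex k) k r),
        pd_zero_of_eqOn (ex j) hU hr (fun s hs => hdiv s hs), mul_zero]
    linarith [hsum, hT1, hT2]
  intro q hq
  -- Step D: derivatives of the Poisson identity at q
  have hDW : ∀ w : ℝ × (Fin n → ℝ),
      (∑ i, pd w (pd (ex i) (pd (ex i) p)) q)
        = -∑ j, ∑ k, (pd w (pd (ex j) fun s => v s k) q * pd (ex k) (fun s => v s j) q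
            + pd (ex j) (fun s => v s k) q * pd w (pd (ex k) fun s => v s j) q) := by
    intro w
    have h0 : pd w (fun r => (∑ i, pd (ex i) (pd (ex i) p) r)
        + ∑ j, ∑ k, pd (ex j) (fun s => v s k) r * pd (ex k) (fun s => v s j) r) q = 0 :=
      pd_zero_of_eqOn w hU hq (fun r hr => poisson r hr)
    have hexp := pd_expandW w (F := fun i => pd (ex i) (pd (ex i) p))
      (a := fun j k => pd (ex j) (fun s => v s k))
      (b := fun j k => pd (ex k) (fun s => v s j)) (q := q)
      (fun i => Dddp (ex i) (ex i) q) (fun j k => Ddv (ex j) k q)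
      (fun j k => Ddv (ex k) j q)
    have h1 := hexp.symm.trans h0
    linarith [h1]
  have hsym2 : ∀ w : ℝ × (Fin n → ℝ),
      ∑ j, ∑ k, (pd w (pd (ex j) fun s => v s k) q * pd (ex k) (fun s => v s j) q
          + pd (ex j) (fun s => v s k) q * pd w (pd (ex k) fun s => v s j) q)
        = 2 * ∑ j, ∑ k, pd w (pd (ex j) fun s => v s k) q * pd (ex k) (fun s => v s j) q := by
    intro w
    simp only [Finset.sum_add_distrib]
    have e : ∑ j, ∑ k, pd (ex j) (fun s => v s k) q * pd w (pd (ex k) fun s => v s j) q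
        = ∑ j, ∑ k, pd w (pd (ex j) fun s => v s k) q * pd (ex k) (fun s => v s j) q := by
      rw [Finset.sum_comm]
      exact Finset.sum_congr rfl fun j _ => Finset.sum_congr rfl fun k _ => mul_comm _ _
    rw [e]; ring
  have hD2 : ∀ w : ℝ × (Fin n → ℝ),
      (∑ i, pd w (pd (ex i) (pd (ex i) p)) q)
        = -2 * ∑ j, ∑ k, pd w (pd (ex j) fun s => v s k) q * pd (ex k) (fun s => v s j) q := by
    intro w
    rw [hDW w, hsym2 w]; ring
  -- differentiated Euler equation at q, rearranged
  have hjk : ∀ j k : Fin n,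
      pd et (pd (ex j) fun s => v s k) q
          + ∑ m, v q m * pd (ex m) (pd (ex j) fun s => v s k) q
        = -pd (ex j) (pd (ex k) p) q
          - ∑ m, pd (ex j) (fun s => v s m) q * pd (ex m) (fun s => v s k) q := by
    intro j k
    have h := euler2 q hq (ex j) k
    rw [cv (ex j) et k] at h
    have hsplit : ∑ m, (pd (ex j) (fun s => v s m) q * pd (ex m) (fun s => v s k) q
        + v q m * pd (ex j) (pd (ex m) fun s => v s k) q)
        = (∑ m, pd (ex j) (fun s => v s m) q * pd (ex m) (fun s => v s k) q)
          + ∑ m, v q m * pd (ex m) (pd (ex j) fun s => v s k) q := by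
      rw [Finset.sum_add_distrib]
      exact congrArg _ (Finset.sum_congr rfl fun m _ => by rw [cv (ex j) (ex m) k])
    rw [hsplit] at h
    linarith
  -- material derivative of Δp at q
  have ha : pd et (fun r => ∑ i, pd (ex i) (pd (ex i) p) r) q
      = -2 * ∑ j, ∑ k, pd et (pd (ex j) fun s => v s k) q * pd (ex k) (fun s => v s j) q := by
    rw [pd_sum et Finset.univ (fun i _ => Dddp (ex i) (ex i) q)]
    exact hD2 et
  have hb : ∀ m : Fin n, pd (ex m) (fun r => ∑ i, pd (ex i) (pd (ex i) p) r) q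
      = -2 * ∑ j, ∑ k, pd (ex m) (pd (ex j) fun s => v s k) q * pd (ex k) (fun s => v s j) q := by
    intro m
    rw [pd_sum (ex m) Finset.univ (fun i _ => Dddp (ex i) (ex i) q)]
    exact hD2 (ex m)
  have hthis : ∑ m, v q m * pd (ex m) (fun r => ∑ i, pd (ex i) (pd (ex i) p) r) q
      = ∑ m, v q m * (-2 * ∑ j, ∑ k, pd (ex m) (pd (ex j) fun s => v s k) q
          * pd (ex k) (fun s => v s j) q) :=
    Finset.sum_congr rfl fun m _ => by rw [hb m]
  have hc : ∑ m, v q m * (-2 * ∑ j, ∑ k, pd (ex m) (pd (ex j) fun s => v s k) q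
        * pd (ex k) (fun s => v s j) q)
      = -2 * ∑ j, ∑ k, (∑ m, v q m * pd (ex m) (pd (ex j) fun s => v s k) q)
          * pd (ex k) (fun s => v s j) q := by
    simp only [Finset.mul_sum, Finset.sum_mul]
    rw [sum3_comm]
    exact Finset.sum_congr rfl fun j _ => Finset.sum_congr rfl fun k _ =>
      Finset.sum_congr rfl fun m _ => by ring
  have hmerge : ∑ j, ∑ k, (pd et (pd (ex j) fun s => v s k) q
        + ∑ m, v q m * pd (ex m) (pd (ex j) fun s => v s k) q)
          * pd (ex k) (fun s => v s j) q
      = (∑ j, ∑ k, pd et (pd (ex j) fun s => v s k) q * pd (ex k) (fun s => v s j) q)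
        + ∑ j, ∑ k, (∑ m, v q m * pd (ex m) (pd (ex j) fun s => v s k) q)
          * pd (ex k) (fun s => v s j) q := by
    simp only [add_mul, Finset.sum_add_distrib]
  have hcomb : ∑ j, ∑ k, (pd et (pd (ex j) fun s => v s k) q
        + ∑ m, v q m * pd (ex m) (pd (ex j) fun s => v s k) q)
          * pd (ex k) (fun s => v s j) q
      = ∑ j, ∑ k, (-pd (ex j) (pd (ex k) p) q
        - ∑ m, pd (ex j) (fun s => v s m) q * pd (ex m) (fun s => v s k) q)
          * pd (ex k) (fun s => v s j) q :=
    Finset.sum_congr rfl fun j _ => Finset.sum_congr rfl fun k _ => by rw [hjk j k]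
  have hfin3 : ∑ j, ∑ k, (-pd (ex j) (pd (ex k) p) q
        - ∑ m, pd (ex j) (fun s => v s m) q * pd (ex m) (fun s => v s k) q)
          * pd (ex k) (fun s => v s j) q
      = -(∑ j, ∑ k, pd (ex j) (pd (ex k) p) q * pd (ex k) (fun s => v s j) q)
        - ∑ j, ∑ k, ∑ m, pd (ex j) (fun s => v s m) q * pd (ex m) (fun s => v s k) q
            * pd (ex k) (fun s => v s j) q := by
    simp only [sub_mul, neg_mul, Finset.sum_mul, Finset.sum_sub_distrib,
      Finset.sum_neg_distrib]
  have hmaterialD :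
      pd et (fun r => ∑ i, pd (ex i) (pd (ex i) p) r) q
        + ∑ m, v q m * pd (ex m) (fun r => ∑ i, pd (ex i) (pd (ex i) p) r) q
      = 2 * (∑ j, ∑ k, pd (ex j) (pd (ex k) p) q * pd (ex k) (fun s => v s j) q)
        + 2 * ∑ j, ∑ k, ∑ m, pd (ex j) (fun s => v s m) q * pd (ex m) (fun s => v s k) q
            * pd (ex k) (fun s => v s j) q := by
    rw [ha, hthis, hc]
    linarith [hmerge, hcomb, hfin3]
  -- Step L: expansion of the left-hand side
  have hF1 : ∀ i : Fin n, pd (ex i) (fun r => pd et p r + ∑ j, v r j * pd (ex j) p r)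
      = fun r => pd (ex i) (pd et p) r
          + ∑ j, (pd (ex i) (fun s => v s j) r * pd (ex j) p r
              + v r j * pd (ex i) (pd (ex j) p) r) := by
    intro i; funext r
    exact pd_expand2 (ex i) (Ddp et r) (fun j => Dv j r) (fun j => Ddp (ex j) r)
  have hL2 : ∀ i : Fin n,
      pd (ex i) (pd (ex i) (fun r => pd et p r + ∑ j, v r j * pd (ex j) p r)) q
        = pd (ex i) (pd (ex i) (pd et p)) q
          + ∑ j, (pd (ex i) (pd (ex i) fun s => v s j) q * pd (ex j) p q
              + pd (ex i) (fun s => v s j) q * pd (ex i) (pd (ex j) p) q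
              + (pd (ex i) (fun s => v s j) q * pd (ex i) (pd (ex j) p) q
                + v q j * pd (ex i) (pd (ex i) (pd (ex j) p)) q)) := by
    intro i
    rw [hF1 i]
    exact pd_expand3 (ex i) (Dddp (ex i) et q) (fun j => Ddv (ex i) j q)
      (fun j => Ddp (ex j) q) (fun j => Dv j q) (fun j => Dddp (ex i) (ex j) q)
  have hc1 : ∀ i : Fin n, pd (ex i) (pd (ex i) (pd et p)) q
      = pd et (pd (ex i) (pd (ex i) p)) q := by
    intro i
    rw [cp (ex i) et, cdp (ex i) et (ex i)]
  have hc2 : ∀ i j : Fin n, pd (ex i) (pd (ex i) (pd (ex j) p)) q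
      = pd (ex j) (pd (ex i) (pd (ex i) p)) q := by
    intro i j
    rw [cp (ex i) (ex j), cdp (ex i) (ex j) (ex i)]
  have e1 : ∀ i : Fin n,
      pd (ex i) (pd (ex i) (fun r => pd et p r + ∑ j, v r j * pd (ex j) p r)) q
        = pd et (pd (ex i) (pd (ex i) p)) q
          + ∑ j, (pd (ex i) (pd (ex i) fun s => v s j) q * pd (ex j) p q
              + 2 * (pd (ex i) (fun s => v s j) q * pd (ex i) (pd (ex j) p) q)
              + v q j * pd (ex j) (pd (ex i) (pd (ex i) p)) q) := by
    intro i
    rw [hL2 i, hc1 i]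
    refine congrArg _ (Finset.sum_congr rfl fun j _ => ?_)
    rw [hc2 i j]; ring
  have hLHS : ∑ i, pd (ex i) (pd (ex i) (fun r => pd et p r + ∑ j, v r j * pd (ex j) p r)) q
      = pd et (fun r => ∑ i, pd (ex i) (pd (ex i) p) r) q
        + ∑ m, v q m * pd (ex m) (fun r => ∑ i, pd (ex i) (pd (ex i) p) r) q
        + (∑ j, (∑ i, pd (ex i) (pd (ex i) fun s => v s j) q) * pd (ex j) p q
          + 2 * ∑ i, ∑ j, pd (ex i) (fun s => v s j) q * pd (ex i) (pd (ex j) p) q) := by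
    rw [Finset.sum_congr rfl fun i (_ : i ∈ Finset.univ) => e1 i]
    simp only [Finset.sum_add_distrib]
    have p1 : ∑ i, pd et (pd (ex i) (pd (ex i) p)) q
        = pd et (fun r => ∑ i, pd (ex i) (pd (ex i) p) r) q :=
      (pd_sum et Finset.univ fun i _ => Dddp (ex i) (ex i) q).symm
    have p2 : ∑ i, ∑ j, pd (ex i) (pd (ex i) fun s => v s j) q * pd (ex j) p q
        = ∑ j, (∑ i, pd (ex i) (pd (ex i) fun s => v s j) q) * pd (ex j) p q := by
      rw [Finset.sum_comm]
      exact Finset.sum_congr rfl fun j _ => (Finset.sum_mul _ _ _).symm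
    have p3 : ∑ i, ∑ j, 2 * (pd (ex i) (fun s => v s j) q * pd (ex i) (pd (ex j) p) q)
        = 2 * ∑ i, ∑ j, pd (ex i) (fun s => v s j) q * pd (ex i) (pd (ex j) p) q := by
      simp only [Finset.mul_sum]
    have p4 : ∑ i, ∑ j, v q j * pd (ex j) (pd (ex i) (pd (ex i) p)) q
        = ∑ m, v q m * pd (ex m) (fun r => ∑ i, pd (ex i) (pd (ex i) p) r) q := by
      rw [Finset.sum_comm]
      refine Finset.sum_congr rfl fun j _ => ?_
      rw [← Finset.mul_sum, ← pd_sum (ex j) Finset.univ fun i _ => Dddp (ex i) (ex i) q]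
    linarith [p1, p2, p3, p4]
  -- symmetry of the Hessian of p
  have hmix : ∑ i, ∑ j, pd (ex i) (fun s => v s j) q * pd (ex i) (pd (ex j) p) q
      = ∑ i, ∑ j, pd (ex i) (pd (ex j) p) q * pd (ex j) (fun s => v s i) q := by
    rw [Finset.sum_comm]
    exact Finset.sum_congr rfl fun i _ => Finset.sum_congr rfl fun j _ => by
      rw [cp (ex j) (ex i)]; ring
  -- cyclic renaming in the cubic term
  have hcube : ∑ j, ∑ k, ∑ m, pd (ex j) (fun s => v s m) q * pd (ex m) (fun s => v s k) q
        * pd (ex k) (fun s => v s j) q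
      = ∑ i, ∑ j, ∑ k, pd (ex i) (fun s => v s j) q * pd (ex j) (fun s => v s k) q
          * pd (ex k) (fun s => v s i) q :=
    Finset.sum_congr rfl fun j _ => Finset.sum_comm
  rw [hLHS]
  linarith [hmaterialD, hmix, hcube]
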